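/- Let F_red and F_blue be clausal ground formulas and let T be a closed two-sided clausal ground tableau for F_red and F_blue. If N is the root of T, then (1) F_red ⊨ ipol(N) and ipol(N) ⊨ ¬F_blue, and (2) lit(ipol(N)) ⊆ lit(F_red) ∩ lit(¬F_blue). -/

import Mathlib

namespace CTI

/-- Terms of first-order logic: variables and function applications.
Function symbols with empty argument lists play the role of constants. -/
inductive Tm : Type where
  | var : ℕ → Tm
  | fn  : ℕ → List Tm → Tm

/-- The variables occurring in a term. -/
def Tm.vars : Tm → List ℕ
  | .var x => [x]
  | .fn _ ts => (ts.attach.map (fun t => Tm.vars t.1)).flatten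
decreasing_by
  have h := List.sizeOf_lt_of_mem t.2; simp_wf; omega

/-- The function symbols occurring in a term. -/
def Tm.funs : Tm → List ℕ
  | .var _ => []
  | .fn f ts => f :: (ts.attach.map (fun t => Tm.funs t.1)).flatten
decreasing_by
  have h := List.sizeOf_lt_of_mem t.2; simp_wf; omega

/-- A term is ground iff it contains no variables. -/
def Tm.ground (t : Tm) : Prop := t.vars = []

/-- An interpretation (structure) over domain `D`. -/
structure Interp (D : Type) where
  fn : ℕ → List D → D
  pr : ℕ → List D → Prop

/-- Evaluation of a term under an interpretation and a variable assignment. -/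
def Tm.eval {D : Type} (I : Interp D) (a : ℕ → D) : Tm → D
  | .var x => a x
  | .fn f ts => I.fn f (ts.attach.map (fun t => Tm.eval I a t.1))
decreasing_by
  have h := List.sizeOf_lt_of_mem t.2; simp_wf; omega

/-- Formulas of first-order logic without equality. -/
inductive Fml : Type where
  | tru : Fml
  | fls : Fml
  | atom : ℕ → List Tm → Fml
  | neg : Fml → Fml
  | and : Fml → Fml → Fml
  | or : Fml → Fml → Fml
  | all : ℕ → Fml → Fml
  | ex : ℕ → Fml → Fml

/-- Satisfaction of a formula under an interpretation and an assignment. -/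
def Fml.holds {D : Type} (I : Interp D) : (ℕ → D) → Fml → Prop
  | _, .tru => True
  | _, .fls => False
  | a, .atom p ts => I.pr p (ts.map (Tm.eval I a))
  | a, .neg F => ¬ Fml.holds I a F
  | a, .and F G => Fml.holds I a F ∧ Fml.holds I a G
  | a, .or F G => Fml.holds I a F ∨ Fml.holds I a G
  | a, .all x F => ∀ d : D, Fml.holds I (Function.update a x d) F
  | a, .ex x F => ∃ d : D, Fml.holds I (Function.update a x d) F

/-- Semantic entailment: every structure (with nonempty domain) and assignment
satisfying `F` satisfies `G`. -/
def Entails (F G : Fml) : Prop :=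
  ∀ (D : Type) (_ : Nonempty D) (I : Interp D) (a : ℕ → D), F.holds I a → G.holds I a

/-- Semantic equivalence. -/
def EquivF (F G : Fml) : Prop := Entails F G ∧ Entails G F

/-- The atoms occurring in a formula, together with a polarity, relative to
the polarity `pol` of the context (`true` = positive). -/
def Fml.litsP : Bool → Fml → Set (Bool × ℕ × List Tm)
  | _, .tru => ∅
  | _, .fls => ∅
  | pol, .atom p ts => {(pol, p, ts)}
  | pol, .neg F => Fml.litsP (!pol) F
  | pol, .and F G => Fml.litsP pol F ∪ Fml.litsP pol G
  | pol, .or F G => Fml.litsP pol F ∪ Fml.litsP pol G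
  | pol, .all _ F => Fml.litsP pol F
  | pol, .ex _ F => Fml.litsP pol F

/-- lit(F): the set of pairs of an atom together with a polarity such that
the atom occurs in `F` with that polarity. -/
def Fml.lits (F : Fml) : Set (Bool × ℕ × List Tm) := Fml.litsP true F

/-- pred(F): predicates together with polarities of their occurrences. -/
def Fml.preds (F : Fml) : Set (Bool × ℕ) := {bp | ∃ ts, (bp.1, bp.2, ts) ∈ F.lits}

/-- The predicate symbols occurring in a formula (irrespective of polarity). -/
def Fml.predSyms (F : Fml) : Set ℕ := {p | ∃ b ts, (b, p, ts) ∈ F.lits}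

/-- fun(F): the function symbols (including constants) occurring in `F`. -/
def Fml.funs : Fml → Set ℕ
  | .tru => ∅
  | .fls => ∅
  | .atom _ ts => {f | ∃ t ∈ ts, f ∈ Tm.funs t}
  | .neg F => F.funs
  | .and F G => F.funs ∪ G.funs
  | .or F G => F.funs ∪ G.funs
  | .all _ F => F.funs
  | .ex _ F => F.funs

/-- The free variables of a formula. -/
def Fml.fv : Fml → Set ℕ
  | .tru => ∅
  | .fls => ∅
  | .atom _ ts => {x | ∃ t ∈ ts, x ∈ Tm.vars t}
  | .neg F => F.fv
  | .and F G => F.fv ∪ G.fv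
  | .or F G => F.fv ∪ G.fv
  | .all x F => F.fv \ {x}
  | .ex x F => F.fv \ {x}

/-- The variables occurring bound in a formula. -/
def Fml.bv : Fml → Set ℕ
  | .tru => ∅
  | .fls => ∅
  | .atom _ _ => ∅
  | .neg F => F.bv
  | .and F G => F.bv ∪ G.bv
  | .or F G => F.bv ∪ G.bv
  | .all x F => insert x F.bv
  | .ex x F => insert x F.bv

/-- All variables occurring in a formula (free or bound). -/
def Fml.varsSet : Fml → Set ℕ
  | .tru => ∅
  | .fls => ∅
  | .atom _ ts => {x | ∃ t ∈ ts, x ∈ Tm.vars t}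
  | .neg F => F.varsSet
  | .and F G => F.varsSet ∪ G.varsSet
  | .or F G => F.varsSet ∪ G.varsSet
  | .all x F => insert x F.varsSet
  | .ex x F => insert x F.varsSet

/-- Quantifier-free formulas. -/
def Fml.qfree : Fml → Prop
  | .tru => True
  | .fls => True
  | .atom _ _ => True
  | .neg F => F.qfree
  | .and F G => F.qfree ∧ G.qfree
  | .or F G => F.qfree ∧ G.qfree
  | .all _ _ => False
  | .ex _ _ => False

/-- Ground formulas: quantifier-free and without variables. -/
def Fml.isGround : Fml → Prop
  | .tru => True
  | .fls => True
  | .atom _ ts => ∀ t ∈ ts, Tm.vars t = []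
  | .neg F => F.isGround
  | .and F G => F.isGround ∧ G.isGround
  | .or F G => F.isGround ∧ G.isGround
  | .all _ _ => False
  | .ex _ _ => False

end CTI

namespace CTI

/-! ### Literals, clauses, clausal formulas -/

/-- A literal: a polarity (`true` = positive atom, `false` = negated atom),
a predicate symbol and an argument list. -/
abbrev Lit := Bool × ℕ × List Tm

/-- A clause: a finite disjunction of literals, as a list. -/
abbrev Clause := List Lit

/-- A clausal formula: a finite conjunction of clauses, as a list. -/
abbrev CForm := List Clause

/-- The complement of a literal. -/
def litCompl (l : Lit) : Lit := (!l.1, l.2.1, l.2.2)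

/-- The formula corresponding to a literal. -/
def litFml (l : Lit) : Fml := if l.1 then .atom l.2.1 l.2.2 else .neg (.atom l.2.1 l.2.2)

/-- The formula corresponding to a clause (disjunction of its literals). -/
def clauseFml (C : Clause) : Fml := C.foldr (fun l F => .or (litFml l) F) .fls

/-- The formula corresponding to a clausal formula (conjunction of its clauses). -/
def cformFml (cs : CForm) : Fml := cs.foldr (fun C F => .and (clauseFml C) F) .tru

def litGround (l : Lit) : Prop := ∀ t ∈ l.2.2, Tm.vars t = []
def clauseGround (C : Clause) : Prop := ∀ l ∈ C, litGround l
def cformGround (cs : CForm) : Prop := ∀ C ∈ cs, clauseGround C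

/-- The function symbols occurring in a clausal formula. -/
def cformFuns (cs : CForm) : Set ℕ := {f | ∃ C ∈ cs, ∃ l ∈ C, ∃ t ∈ l.2.2, f ∈ Tm.funs t}

/-- Application of a substitution to a term. -/
def Tm.applySub (σ : ℕ → Tm) : Tm → Tm
  | .var x => σ x
  | .fn f ts => .fn f (ts.attach.map (fun t => Tm.applySub σ t.1))
decreasing_by
  have h := List.sizeOf_lt_of_mem t.2; simp_wf; omega

/-- Application of a substitution to a literal. -/
def litSub (σ : ℕ → Tm) (l : Lit) : Lit := (l.1, l.2.1, l.2.2.map (Tm.applySub σ))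

/-- `C` is a substitution instance of the clause `D`. -/
def instClause (C D : Clause) : Prop := ∃ σ : ℕ → Tm, C = D.map (litSub σ)

/-- The subterm relation: `Subt s t` iff `s` occurs as a subterm of `t`. -/
inductive Subt : Tm → Tm → Prop
  | refl (t) : Subt t t
  | step {s u} (f : ℕ) (ts : List Tm) : u ∈ ts → Subt s u → Subt s (.fn f ts)

/-- Strict subterm relation. -/
def StrictSubt (s t : Tm) : Prop := Subt s t ∧ s ≠ t

/-- `Tm.builtFrom S C t`: `t` is a ground term built from function symbols in `S`,
where the symbols in `C` may additionally be used as constants. -/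
inductive Tm.builtFrom (S C : Set ℕ) : Tm → Prop
  | app {f : ℕ} {ts : List Tm} : f ∈ S → (∀ t ∈ ts, Tm.builtFrom S C t) →
      Tm.builtFrom S C (.fn f ts)
  | cst {c : ℕ} : c ∈ C → Tm.builtFrom S C (.fn c [])

/-! ### Clausal tableaux -/

/-- A node of a clausal tableau: a literal label, a side label
(`true` = red/left, `false` = blue/right; ignored for one-sided tableaux)
and the list of children in left-to-right order.  A whole tableau is the
list of children of the (unlabeled) root. -/
inductive Tab : Type where
  | node : Lit → Bool → List Tab → Tab

def Tab.lit : Tab → Lit | .node l _ _ => l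
def Tab.side : Tab → Bool | .node _ s _ => s
def Tab.children : Tab → List Tab | .node _ _ cs => cs

/-- The subtrees of a clausal tableau (given as list of children of the root)
together with the branch of (literal, side) pairs of their strict ancestors,
innermost first. -/
inductive OccIn (T : List Tab) : List (Lit × Bool) → Tab → Prop
  | top {t} : t ∈ T → OccIn T [] t
  | step {br l s cs c} : OccIn T br (.node l s cs) → c ∈ cs → OccIn T ((l, s) :: br) c

/-- Well-formedness of a (one-sided) clausal tableau below some node, for the
clausal formula `F`: the children of every node either are absent or their
literal labels form an instance of a clause in `F`. -/
inductive TabFor (F : CForm) : Tab → Prop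
  | mk {l s cs} : (cs = [] ∨ ∃ D ∈ F, instClause (cs.map Tab.lit) D) →
      (∀ c ∈ cs, TabFor F c) → TabFor F (.node l s cs)

/-- A clausal tableau for the clausal formula `F`. -/
def TableauFor (F : CForm) (T : List Tab) : Prop :=
  (T = [] ∨ ∃ D ∈ F, instClause (T.map Tab.lit) D) ∧ ∀ t ∈ T, TabFor F t

/-- Closedness of the subtree rooted at a node whose strict ancestors carry
the literals in `br`: every leaf has an ancestor labeled with its complement. -/
inductive ClosedFrom : List Lit → Tab → Prop
  | leaf {br : List Lit} {l s} : litCompl l ∈ br → ClosedFrom br (.node l s [])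
  | inner {br : List Lit} {l s cs} : cs ≠ [] → (∀ c ∈ cs, ClosedFrom (l :: br) c) →
      ClosedFrom br (.node l s cs)

/-- A closed clausal tableau: all leaves are closed (the root, being unlabeled,
must have children). -/
def ClosedTableau (T : List Tab) : Prop := T ≠ [] ∧ ∀ t ∈ T, ClosedFrom [] t

/-- All nodes of a subtree satisfy `P`. -/
inductive TabAll (P : Tab → Prop) : Tab → Prop
  | mk {l s cs} : P (.node l s cs) → (∀ c ∈ cs, TabAll P c) → TabAll P (.node l s cs)

/-! ### Two-sided clausal tableaux and interpolant extraction -/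

/-- Well-formedness of a two-sided clausal tableau below a node, for clausal
formulas `Fr` (side `true` = red) and `Fb` (side `false` = blue):
siblings have the same side, and the literal labels of the children of any
node form an instance of a clause of the formula of their side. -/
inductive TwoTabFor (Fr Fb : CForm) : Tab → Prop
  | mk {l s cs} :
      (cs = [] ∨ ∃ b : Bool, (∀ c ∈ cs, Tab.side c = b) ∧
        ∃ D ∈ (if b then Fr else Fb), instClause (cs.map Tab.lit) D) →
      (∀ c ∈ cs, TwoTabFor Fr Fb c) → TwoTabFor Fr Fb (.node l s cs)

/-- A two-sided clausal tableau for `Fr` and `Fb`. -/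
def TwoTableauFor (Fr Fb : CForm) (T : List Tab) : Prop :=
  (T = [] ∨ ∃ b : Bool, (∀ c ∈ T, Tab.side c = b) ∧
    ∃ D ∈ (if b then Fr else Fb), instClause (T.map Tab.lit) D)
  ∧ ∀ t ∈ T, TwoTabFor Fr Fb t

/-- Closedness, with the branch carrying side labels. -/
inductive SClosedFrom : List (Lit × Bool) → Tab → Prop
  | leaf {br : List (Lit × Bool)} {l s} : (∃ s', (litCompl l, s') ∈ br) →
      SClosedFrom br (.node l s [])
  | inner {br : List (Lit × Bool)} {l s cs} : cs ≠ [] →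
      (∀ c ∈ cs, SClosedFrom ((l, s) :: br) c) → SClosedFrom br (.node l s cs)

/-- The value of ipol at a closed leaf, determined by the side `s` of the leaf
and the side `ts` of its target, from the literal label `l`. -/
def leafIpol (s ts : Bool) (l : Lit) : Fml :=
  match s, ts with
  | true, true => .fls
  | true, false => litFml l
  | false, true => litFml (litCompl l)
  | false, false => .tru

/-- `Ipol br t H`: `H` is a value of ipol at the node `t` whose branch of strict
ancestors (with sides) is `br`, for some association of targets to closed leaves.
At a leaf, the target is an ancestor labeled with the complement of the leaf's
literal; at an inner node, ipol is the disjunction (side red) or conjunction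
(side blue) of the values at the children. -/
inductive Ipol : List (Lit × Bool) → Tab → Fml → Prop
  | leaf {br l s ts} : (litCompl l, ts) ∈ br →
      Ipol br (.node l s []) (leafIpol s ts l)
  | innerR {br l s cs Hs} : cs ≠ [] → (∀ c ∈ cs, Tab.side c = true) →
      cs.length = Hs.length →
      (∀ p ∈ List.zip cs Hs, Ipol ((l, s) :: br) p.1 p.2) →
      Ipol br (.node l s cs) (Hs.foldr .or .fls)
  | innerB {br l s cs Hs} : cs ≠ [] → (∀ c ∈ cs, Tab.side c = false) →
      cs.length = Hs.length →
      (∀ p ∈ List.zip cs Hs, Ipol ((l, s) :: br) p.1 p.2) →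
      Ipol br (.node l s cs) (Hs.foldr .and .tru)

/-- `IpolRoot T H`: `H` is a value of ipol at the root of the tableau `T`. -/
inductive IpolRoot : List Tab → Fml → Prop
  | rootR {T Hs} : T ≠ [] → (∀ t ∈ T, Tab.side t = true) →
      T.length = Hs.length → (∀ p ∈ List.zip T Hs, Ipol [] p.1 p.2) →
      IpolRoot T (Hs.foldr .or .fls)
  | rootB {T Hs} : T ≠ [] → (∀ t ∈ T, Tab.side t = false) →
      T.length = Hs.length → (∀ p ∈ List.zip T Hs, Ipol [] p.1 p.2) →
      IpolRoot T (Hs.foldr .and .tru)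

/-- branch_S(N): the conjunction of the literals with side `s` on the branch `br`. -/
def branchFml (s : Bool) (br : List (Lit × Bool)) : Fml :=
  ((br.filter (fun p => p.2 == s)).map (fun p => litFml p.1)).foldr .and .tru

end CTI
namespace CTI

theorem vars_fn_nil {f : ℕ} {ts : List Tm} (h : Tm.vars (.fn f ts) = []) :
    ∀ t ∈ ts, Tm.vars t = [] := by
  rw [Tm.vars] at h
  intro t ht
  have := List.flatten_eq_nil_iff.mp h (Tm.vars t)
    (List.mem_map.mpr ⟨⟨t, ht⟩, List.mem_attach _ _, rfl⟩)
  exact this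

theorem applySub_ground (σ : ℕ → Tm) : ∀ t : Tm, Tm.vars t = [] → Tm.applySub σ t = t := by
  have key : ∀ n, ∀ t : Tm, sizeOf t ≤ n → Tm.vars t = [] → Tm.applySub σ t = t := by
    intro n
    induction n with
    | zero => intro t h; cases t <;> simp at h
    | succ n ih =>
      intro t hsz hv
      cases t with
      | var x => rw [Tm.vars] at hv; simp at hv
      | fn f ts =>
        rw [Tm.applySub]
        congr 1
        have hstep : ∀ t' ∈ ts, Tm.applySub σ t' = t' := by
          intro t' ht'
          have hlt := List.sizeOf_lt_of_mem ht'
          simp only [Tm.fn.sizeOf_spec] at hsz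
          exact ih t' (by omega) (vars_fn_nil hv t' ht')
        calc ts.attach.map (fun t => Tm.applySub σ t.1)
            = ts.attach.map (fun t => t.1) :=
              List.map_congr_left (fun a _ => hstep a.1 a.2)
          _ = ts := List.attach_map_subtype_val ts
  intro t; exact key (sizeOf t) t le_rfl

theorem litSub_ground {σ : ℕ → Tm} {l : Lit} (h : litGround l) : litSub σ l = l := by
  obtain ⟨b, p, ts⟩ := l
  simp only [litSub, Prod.mk.injEq, true_and]
  calc ts.map (Tm.applySub σ) = ts.map id := List.map_congr_left (fun t ht => applySub_ground σ t (h t ht))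
    _ = ts := List.map_id ts

theorem instClause_eq {C D : Clause} (hD : clauseGround D) (h : instClause C D) : C = D := by
  obtain ⟨σ, rfl⟩ := h
  calc D.map (litSub σ) = D.map id := List.map_congr_left (fun l hl => litSub_ground (hD l hl))
    _ = D := List.map_id D

end CTI
namespace CTI

theorem clauseFml_cons (l : Lit) (t : Clause) :
    clauseFml (l :: t) = .or (litFml l) (clauseFml t) := rfl

theorem cformFml_cons (C : Clause) (t : CForm) :
    cformFml (C :: t) = .and (clauseFml C) (cformFml t) := rfl

theorem holds_or {D : Type} {I : Interp D} {a : ℕ → D} {F G : Fml} :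
    (Fml.or F G).holds I a ↔ F.holds I a ∨ G.holds I a := Iff.rfl

theorem holds_and {D : Type} {I : Interp D} {a : ℕ → D} {F G : Fml} :
    (Fml.and F G).holds I a ↔ F.holds I a ∧ G.holds I a := Iff.rfl

theorem holds_neg {D : Type} {I : Interp D} {a : ℕ → D} {F : Fml} :
    (Fml.neg F).holds I a ↔ ¬ F.holds I a := Iff.rfl

theorem holds_or_foldr {D : Type} (I : Interp D) (a : ℕ → D) (Hs : List Fml) :
    (Hs.foldr Fml.or Fml.fls).holds I a ↔ ∃ h ∈ Hs, h.holds I a := by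
  induction Hs with
  | nil => simp [Fml.holds]
  | cons h t ih => rw [List.foldr_cons, holds_or, ih]; simp

theorem holds_and_foldr {D : Type} (I : Interp D) (a : ℕ → D) (Hs : List Fml) :
    (Hs.foldr Fml.and Fml.tru).holds I a ↔ ∀ h ∈ Hs, h.holds I a := by
  induction Hs with
  | nil => simp [Fml.holds]
  | cons h t ih => rw [List.foldr_cons, holds_and, ih]; simp

theorem holds_clause {D : Type} (I : Interp D) (a : ℕ → D) (C : Clause) :
    (clauseFml C).holds I a ↔ ∃ l ∈ C, (litFml l).holds I a := by
  induction C with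
  | nil => simp [clauseFml, Fml.holds]
  | cons l t ih => rw [clauseFml_cons, holds_or, ih]; simp

theorem holds_cform {D : Type} (I : Interp D) (a : ℕ → D) (cs : CForm) :
    (cformFml cs).holds I a ↔ ∀ C ∈ cs, (clauseFml C).holds I a := by
  induction cs with
  | nil => simp [cformFml, Fml.holds]
  | cons C t ih => rw [cformFml_cons, holds_and, ih]; simp

theorem litCompl_compl (l : Lit) : litCompl (litCompl l) = l := by
  simp [litCompl]

theorem holds_litCompl {D : Type} (I : Interp D) (a : ℕ → D) (l : Lit) :
    (litFml (litCompl l)).holds I a ↔ ¬ (litFml l).holds I a := by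
  obtain ⟨b, p, ts⟩ := l
  cases b <;> simp [litFml, litCompl, Fml.holds]

theorem mem_litsP_litFml_true (l x : Lit) :
    x ∈ Fml.litsP true (litFml l) ↔ x = l := by
  obtain ⟨c, p, ts⟩ := l
  cases c <;> simp [litFml, litCompl, Fml.litsP]

theorem mem_litsP_litFml_false (l x : Lit) :
    x ∈ Fml.litsP false (litFml l) ↔ x = litCompl l := by
  obtain ⟨c, p, ts⟩ := l
  cases c <;> simp [litFml, litCompl, Fml.litsP]

theorem litsP_or (b : Bool) (F G : Fml) :
    Fml.litsP b (Fml.or F G) = Fml.litsP b F ∪ Fml.litsP b G := rfl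

theorem litsP_and (b : Bool) (F G : Fml) :
    Fml.litsP b (Fml.and F G) = Fml.litsP b F ∪ Fml.litsP b G := rfl

theorem mem_litsP_clause (b : Bool) (C : Clause) (x : Lit) :
    x ∈ Fml.litsP b (clauseFml C) ↔ ∃ l ∈ C, x ∈ Fml.litsP b (litFml l) := by
  induction C with
  | nil => simp [clauseFml, Fml.litsP]
  | cons l t ih => rw [clauseFml_cons, litsP_or, Set.mem_union, ih]; simp

theorem mem_litsP_cform (b : Bool) (cs : CForm) (x : Lit) :
    x ∈ Fml.litsP b (cformFml cs) ↔ ∃ C ∈ cs, x ∈ Fml.litsP b (clauseFml C) := by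
  induction cs with
  | nil => simp [cformFml, Fml.litsP]
  | cons C t ih => rw [cformFml_cons, litsP_and, Set.mem_union, ih]; simp

theorem mem_lits_cform (cs : CForm) (x : Lit) :
    x ∈ Fml.lits (cformFml cs) ↔ ∃ C ∈ cs, x ∈ C := by
  show x ∈ Fml.litsP true _ ↔ _
  rw [mem_litsP_cform]
  simp only [mem_litsP_clause, mem_litsP_litFml_true]
  constructor
  · rintro ⟨C, hC, l, hl, rfl⟩; exact ⟨C, hC, hl⟩
  · rintro ⟨C, hC, hl⟩; exact ⟨C, hC, x, hl, rfl⟩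

theorem mem_lits_neg_cform (cs : CForm) (x : Lit) :
    x ∈ Fml.lits (.neg (cformFml cs)) ↔ ∃ C ∈ cs, litCompl x ∈ C := by
  show x ∈ Fml.litsP false (cformFml cs) ↔ _
  rw [mem_litsP_cform]
  simp only [mem_litsP_clause, mem_litsP_litFml_false]
  constructor
  · rintro ⟨C, hC, l, hl, rfl⟩
    exact ⟨C, hC, by rwa [litCompl_compl]⟩
  · rintro ⟨C, hC, hl⟩; exact ⟨C, hC, litCompl x, hl, by rw [litCompl_compl]⟩

theorem mem_lits_or_foldr (Hs : List Fml) (x : Lit) :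
    x ∈ Fml.lits (Hs.foldr Fml.or Fml.fls) ↔ ∃ h ∈ Hs, x ∈ Fml.lits h := by
  show x ∈ Fml.litsP true _ ↔ _
  induction Hs with
  | nil => simp [Fml.litsP]
  | cons h t ih => rw [List.foldr_cons, litsP_or, Set.mem_union, ih]; simp [Fml.lits]

theorem mem_lits_and_foldr (Hs : List Fml) (x : Lit) :
    x ∈ Fml.lits (Hs.foldr Fml.and Fml.tru) ↔ ∃ h ∈ Hs, x ∈ Fml.lits h := by
  show x ∈ Fml.litsP true _ ↔ _
  induction Hs with
  | nil => simp [Fml.litsP]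
  | cons h t ih => rw [List.foldr_cons, litsP_and, Set.mem_union, ih]; simp [Fml.lits]

theorem exists_zip_left {α β : Type*} {cs : List α} {Hs : List β} (h : cs.length = Hs.length)
    {c : α} (hc : c ∈ cs) : ∃ x, (c, x) ∈ cs.zip Hs := by
  obtain ⟨i, hi, rfl⟩ := List.mem_iff_getElem.mp hc
  exact ⟨Hs[i]'(h ▸ hi), List.mem_iff_getElem.mpr ⟨i, by simp [h ▸ hi, hi], by simp⟩⟩

theorem exists_zip_right {α β : Type*} {cs : List α} {Hs : List β} (h : cs.length = Hs.length)
    {x : β} (hx : x ∈ Hs) : ∃ c, (c, x) ∈ cs.zip Hs := by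
  obtain ⟨i, hi, rfl⟩ := List.mem_iff_getElem.mp hx
  exact ⟨cs[i]'(h ▸ hi), List.mem_iff_getElem.mpr ⟨i, by simp [h ▸ hi, hi], by simp⟩⟩

end CTI
namespace CTI

theorem ipol_main (Fr Fb : CForm) (hgFr : cformGround Fr) (hgFb : cformGround Fb) :
    ∀ (br : List (Lit × Bool)) (t : Tab) (H : Fml), Ipol br t H →
    TwoTabFor Fr Fb t →
    (∀ p ∈ (t.lit, t.side) :: br, ∃ C ∈ (if p.2 then Fr else Fb), p.1 ∈ C) →
    ((∀ (Dm : Type) (I : Interp Dm) (a : ℕ → Dm),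
        (cformFml Fr).holds I a →
        (∀ p ∈ (t.lit, t.side) :: br, p.2 = true → (litFml p.1).holds I a) →
        H.holds I a)
     ∧ (∀ (Dm : Type) (I : Interp Dm) (a : ℕ → Dm),
        (cformFml Fb).holds I a →
        (∀ p ∈ (t.lit, t.side) :: br, p.2 = false → (litFml p.1).holds I a) →
        ¬ H.holds I a)
     ∧ Fml.lits H ⊆ Fml.lits (cformFml Fr) ∩ Fml.lits (.neg (cformFml Fb))) := by
  intro br t H hip
  induction hip with
  | @leaf br l s ts hmem =>
    intro _ hbr
    simp only [Tab.lit, Tab.side] at hbr ⊢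
    have hself := hbr (l, s) List.mem_cons_self
    have htgt := hbr (litCompl l, ts) (List.mem_cons_of_mem _ hmem)
    simp only at hself htgt
    cases s <;> cases ts <;> simp only [leafIpol]
    -- s = false, ts = false : H = .tru
    case false.false =>
      refine ⟨fun _ _ _ _ _ => trivial, ?_, by simp [Fml.lits, Fml.litsP]⟩
      intro Dm I a _ hblue _
      have h1 := hblue (l, false) List.mem_cons_self rfl
      have h2 := hblue (litCompl l, false) (List.mem_cons_of_mem _ hmem) rfl
      exact (holds_litCompl I a l).mp h2 h1
    -- s = false, ts = true : H = litFml (litCompl l)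
    case false.true =>
      refine ⟨?_, ?_, ?_⟩
      · intro Dm I a _ hred
        exact hred (litCompl l, true) (List.mem_cons_of_mem _ hmem) rfl
      · intro Dm I a _ hblue hH
        exact (holds_litCompl I a l).mp hH (hblue (l, false) List.mem_cons_self rfl)
      · intro x hx
        have hx' : x = litCompl l := (mem_litsP_litFml_true _ _).mp hx
        subst hx'
        constructor
        · rw [mem_lits_cform]; simpa using htgt
        · rw [mem_lits_neg_cform, litCompl_compl]; simpa using hself
    -- s = true, ts = false : H = litFml l
    case true.false =>
      refine ⟨?_, ?_, ?_⟩
      · intro Dm I a _ hred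
        exact hred (l, true) List.mem_cons_self rfl
      · intro Dm I a _ hblue hH
        exact (holds_litCompl I a l).mp
          (hblue (litCompl l, false) (List.mem_cons_of_mem _ hmem) rfl) hH
      · intro x hx
        have hx' : x = l := (mem_litsP_litFml_true _ _).mp hx
        subst hx'
        constructor
        · rw [mem_lits_cform]; simpa using hself
        · rw [mem_lits_neg_cform]; simpa using htgt
    -- s = true, ts = true : H = .fls
    case true.true =>
      refine ⟨?_, fun _ _ _ _ _ h => h, by simp [Fml.lits, Fml.litsP]⟩
      intro Dm I a _ hred
      have h1 := hred (l, true) List.mem_cons_self rfl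
      have h2 := hred (litCompl l, true) (List.mem_cons_of_mem _ hmem) rfl
      exact (holds_litCompl I a l).mp h2 h1
  | @innerR br l s cs Hs hne hsides hlen hzip ih =>
    intro htab hbr
    simp only [Tab.lit, Tab.side] at hbr ⊢
    cases htab with
    | mk hcl hch =>
    obtain ⟨c0, hc0⟩ := List.exists_mem_of_ne_nil cs hne
    rcases hcl with h | ⟨b, hb, D, hD, hinst⟩
    · exact absurd h hne
    have hb' : b = true := by rw [← hb c0 hc0, hsides c0 hc0]
    subst hb'
    rw [if_pos rfl] at hD
    have hDeq : cs.map Tab.lit = D := instClause_eq (hgFr D hD) hinst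
    have hchbr : ∀ c ∈ cs, ∀ p ∈ ((Tab.lit c, Tab.side c) :: (l, s) :: br),
        ∃ C ∈ (if p.2 then Fr else Fb), p.1 ∈ C := by
      intro c hc p hp
      rcases List.mem_cons.mp hp with rfl | hp'
      · simp only [hsides c hc, if_pos rfl]
        exact ⟨D, hD, hDeq ▸ List.mem_map_of_mem (f := Tab.lit) hc⟩
      · exact hbr p hp'
    refine ⟨?_, ?_, ?_⟩
    · intro Dm I a hFr hred
      rw [holds_or_foldr]
      have hcls := (holds_cform I a Fr).mp hFr D hD
      obtain ⟨l', hl', hh⟩ := (holds_clause I a D).mp hcls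
      rw [← hDeq] at hl'
      obtain ⟨c, hc, rfl⟩ := List.mem_map.mp hl'
      obtain ⟨h, hpz⟩ := exists_zip_left hlen hc
      obtain ⟨hcc, hhh⟩ := List.of_mem_zip hpz
      refine ⟨h, hhh, (ih (c, h) hpz (hch c hcc) (hchbr c hcc)).1 Dm I a hFr ?_⟩
      intro p hp hp2
      rcases List.mem_cons.mp hp with rfl | hp'
      · exact hh
      · exact hred p hp' hp2
    · intro Dm I a hFb hblue hH
      rw [holds_or_foldr] at hH
      obtain ⟨h, hh, hholds⟩ := hH
      obtain ⟨c, hpz⟩ := exists_zip_right hlen hh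
      obtain ⟨hcc, _⟩ := List.of_mem_zip hpz
      refine (ih (c, h) hpz (hch c hcc) (hchbr c hcc)).2.1 Dm I a hFb ?_ hholds
      intro p hp hp2
      rcases List.mem_cons.mp hp with rfl | hp'
      · simp [hsides c hcc] at hp2
      · exact hblue p hp' hp2
    · intro x hx
      rw [mem_lits_or_foldr] at hx
      obtain ⟨h, hh, hx'⟩ := hx
      obtain ⟨c, hpz⟩ := exists_zip_right hlen hh
      obtain ⟨hcc, _⟩ := List.of_mem_zip hpz
      exact (ih (c, h) hpz (hch c hcc) (hchbr c hcc)).2.2 hx'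
  | @innerB br l s cs Hs hne hsides hlen hzip ih =>
    intro htab hbr
    simp only [Tab.lit, Tab.side] at hbr ⊢
    cases htab with
    | mk hcl hch =>
    obtain ⟨c0, hc0⟩ := List.exists_mem_of_ne_nil cs hne
    rcases hcl with h | ⟨b, hb, D, hD, hinst⟩
    · exact absurd h hne
    have hb' : b = false := by rw [← hb c0 hc0, hsides c0 hc0]
    subst hb'
    rw [if_neg (by simp)] at hD
    have hDeq : cs.map Tab.lit = D := instClause_eq (hgFb D hD) hinst
    have hchbr : ∀ c ∈ cs, ∀ p ∈ ((Tab.lit c, Tab.side c) :: (l, s) :: br),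
        ∃ C ∈ (if p.2 then Fr else Fb), p.1 ∈ C := by
      intro c hc p hp
      rcases List.mem_cons.mp hp with rfl | hp'
      · simp only [hsides c hc, Bool.false_eq_true, if_neg, if_false]
        exact ⟨D, hD, hDeq ▸ List.mem_map_of_mem (f := Tab.lit) hc⟩
      · exact hbr p hp'
    refine ⟨?_, ?_, ?_⟩
    · intro Dm I a hFr hred
      rw [holds_and_foldr]
      intro h hh
      obtain ⟨c, hpz⟩ := exists_zip_right hlen hh
      obtain ⟨hcc, _⟩ := List.of_mem_zip hpz
      refine (ih (c, h) hpz (hch c hcc) (hchbr c hcc)).1 Dm I a hFr ?_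
      intro p hp hp2
      rcases List.mem_cons.mp hp with rfl | hp'
      · simp [hsides c hcc] at hp2
      · exact hred p hp' hp2
    · intro Dm I a hFb hblue hH
      rw [holds_and_foldr] at hH
      have hcls := (holds_cform I a Fb).mp hFb D hD
      obtain ⟨l', hl', hh⟩ := (holds_clause I a D).mp hcls
      rw [← hDeq] at hl'
      obtain ⟨c, hc, rfl⟩ := List.mem_map.mp hl'
      obtain ⟨h, hpz⟩ := exists_zip_left hlen hc
      obtain ⟨hcc, hhh⟩ := List.of_mem_zip hpz
      refine (ih (c, h) hpz (hch c hcc) (hchbr c hcc)).2.1 Dm I a hFb ?_ (hH h hhh)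
      intro p hp hp2
      rcases List.mem_cons.mp hp with rfl | hp'
      · exact hh
      · exact hblue p hp' hp2
    · intro x hx
      rw [mem_lits_and_foldr] at hx
      obtain ⟨h, hh, hx'⟩ := hx
      obtain ⟨c, hpz⟩ := exists_zip_right hlen hh
      obtain ⟨hcc, _⟩ := List.of_mem_zip hpz
      exact (ih (c, h) hpz (hch c hcc) (hchbr c hcc)).2.2 hx'

end CTI
namespace CTI

/-- correctness of ground interpolant extraction from a closed
two-sided clausal ground tableau, at the root. -/
theorem ground_ipol_correct (Fr Fb : CForm) (T : List Tab)
    (hgFr : cformGround Fr) (hgFb : cformGround Fb)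
    (htab : TwoTableauFor Fr Fb T)
    (hgT : ∀ br t, OccIn T br t → litGround (Tab.lit t))
    (hclosed : ∀ t ∈ T, SClosedFrom [] t) :
    ∀ H, IpolRoot T H →
      (Entails (cformFml Fr) H ∧ Entails H (.neg (cformFml Fb)))
      ∧ Fml.lits H ⊆ Fml.lits (cformFml Fr) ∩ Fml.lits (.neg (cformFml Fb)) := by
  obtain ⟨hcl, hch⟩ := htab
  intro H hip
  cases hip with
  | rootR hne hsides hlen hzip =>
    obtain ⟨c0, hc0⟩ := List.exists_mem_of_ne_nil T hne
    rcases hcl with h | ⟨b, hb, D, hD, hinst⟩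
    · exact absurd h hne
    have hb' : b = true := by rw [← hb c0 hc0, hsides c0 hc0]
    subst hb'
    rw [if_pos rfl] at hD
    have hDeq : T.map Tab.lit = D := instClause_eq (hgFr D hD) hinst
    have hmain : ∀ (p : Tab × Fml), p.1 ∈ T → Ipol [] p.1 p.2 → _ := fun p hmemT hp =>
      ipol_main Fr Fb hgFr hgFb [] p.1 p.2 hp (hch p.1 hmemT)
        (by
          intro q hq
          rcases List.mem_cons.mp hq with rfl | hq'
          · simp only [hsides p.1 hmemT, if_pos rfl]
            exact ⟨D, hD, hDeq ▸ List.mem_map_of_mem (f := Tab.lit) hmemT⟩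
          · simp at hq')
    refine ⟨⟨?_, ?_⟩, ?_⟩
    · intro Dm _ I a hFr
      rw [holds_or_foldr]
      have hcls := (holds_cform I a Fr).mp hFr D hD
      obtain ⟨l', hl', hh⟩ := (holds_clause I a D).mp hcls
      rw [← hDeq] at hl'
      obtain ⟨c, hc, rfl⟩ := List.mem_map.mp hl'
      obtain ⟨h, hpz⟩ := exists_zip_left hlen hc
      obtain ⟨hcc, hhh⟩ := List.of_mem_zip hpz
      refine ⟨h, hhh, (hmain (c, h) hcc (hzip _ hpz)).1 Dm I a hFr ?_⟩
      intro p hp hp2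
      rcases List.mem_cons.mp hp with rfl | hp'
      · exact hh
      · simp at hp'
    · intro Dm _ I a hH
      rw [holds_neg]
      intro hFb
      rw [holds_or_foldr] at hH
      obtain ⟨h, hh, hholds⟩ := hH
      obtain ⟨c, hpz⟩ := exists_zip_right hlen hh
      obtain ⟨hcc, _⟩ := List.of_mem_zip hpz
      refine (hmain (c, h) hcc (hzip _ hpz)).2.1 Dm I a hFb ?_ hholds
      intro p hp hp2
      rcases List.mem_cons.mp hp with rfl | hp'
      · simp [hsides c hcc] at hp2
      · simp at hp'
    · intro x hx
      rw [mem_lits_or_foldr] at hx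
      obtain ⟨h, hh, hx'⟩ := hx
      obtain ⟨c, hpz⟩ := exists_zip_right hlen hh
      obtain ⟨hcc, _⟩ := List.of_mem_zip hpz
      exact (hmain (c, h) hcc (hzip _ hpz)).2.2 hx'
  | rootB hne hsides hlen hzip =>
    obtain ⟨c0, hc0⟩ := List.exists_mem_of_ne_nil T hne
    rcases hcl with h | ⟨b, hb, D, hD, hinst⟩
    · exact absurd h hne
    have hb' : b = false := by rw [← hb c0 hc0, hsides c0 hc0]
    subst hb'
    rw [if_neg (by simp)] at hD
    have hDeq : T.map Tab.lit = D := instClause_eq (hgFb D hD) hinst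
    have hmain : ∀ (p : Tab × Fml), p.1 ∈ T → Ipol [] p.1 p.2 → _ := fun p hmemT hp =>
      ipol_main Fr Fb hgFr hgFb [] p.1 p.2 hp (hch p.1 hmemT)
        (by
          intro q hq
          rcases List.mem_cons.mp hq with rfl | hq'
          · simp only [hsides p.1 hmemT, Bool.false_eq_true, if_false]
            exact ⟨D, hD, hDeq ▸ List.mem_map_of_mem (f := Tab.lit) hmemT⟩
          · simp at hq')
    refine ⟨⟨?_, ?_⟩, ?_⟩
    · intro Dm _ I a hFr
      rw [holds_and_foldr]
      intro h hh
      obtain ⟨c, hpz⟩ := exists_zip_right hlen hh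
      obtain ⟨hcc, _⟩ := List.of_mem_zip hpz
      refine (hmain (c, h) hcc (hzip _ hpz)).1 Dm I a hFr ?_
      intro p hp hp2
      rcases List.mem_cons.mp hp with rfl | hp'
      · simp [hsides c hcc] at hp2
      · simp at hp'
    · intro Dm _ I a hH
      rw [holds_neg]
      intro hFb
      rw [holds_and_foldr] at hH
      have hcls := (holds_cform I a Fb).mp hFb D hD
      obtain ⟨l', hl', hh⟩ := (holds_clause I a D).mp hcls
      rw [← hDeq] at hl'
      obtain ⟨c, hc, rfl⟩ := List.mem_map.mp hl'
      obtain ⟨h, hpz⟩ := exists_zip_left hlen hc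
      obtain ⟨hcc, hhh⟩ := List.of_mem_zip hpz
      refine (hmain (c, h) hcc (hzip _ hpz)).2.1 Dm I a hFb ?_ (hH h hhh)
      intro p hp hp2
      rcases List.mem_cons.mp hp with rfl | hp'
      · exact hh
      · simp at hp'
    · intro x hx
      rw [mem_lits_and_foldr] at hx
      obtain ⟨h, hh, hx'⟩ := hx
      obtain ⟨c, hpz⟩ := exists_zip_right hlen hh
      obtain ⟨hcc, _⟩ := List.of_mem_zip hpz
      exact (hmain (c, h) hcc (hzip _ hpz)).2.2 hx'

end CTI
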